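/- Let p be an odd prime and P = F_p[y_0, y_-, y_+] with the sl_2-derivations β_0, β_-, β_+ as above. Every polynomial f ∈ P with β_0(f) = β_-(f) = β_+(f) = 0 lies in the F_p-subalgebra A generated by κ = y_0^2 + y_- y_+, s_0 = y_0^p, s_- = y_-^p, and s_+ = y_+^p. Hence the invariant ring H^0(sl_2(F_p), Poly(ad^*)) equals A. -/

import Mathlib

open MvPolynomial

/-- The derivation `β_0 = 2y_+ ∂/∂y_+ - 2y_- ∂/∂y_-` on `F_p[y_0, y_-, y_+]`
(variables indexed `0 ↦ y_0`, `1 ↦ y_-`, `2 ↦ y_+`). -/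
noncomputable def betaZero (p : ℕ) :
    Derivation (ZMod p) (MvPolynomial (Fin 3) (ZMod p)) (MvPolynomial (Fin 3) (ZMod p)) :=
  (2 * X 2 : MvPolynomial (Fin 3) (ZMod p)) • pderiv 2
    - (2 * X 1 : MvPolynomial (Fin 3) (ZMod p)) • pderiv 1

/-- The derivation `β_- = -y_+ ∂/∂y_0 + 2y_0 ∂/∂y_-`. -/
noncomputable def betaMinus (p : ℕ) :
    Derivation (ZMod p) (MvPolynomial (Fin 3) (ZMod p)) (MvPolynomial (Fin 3) (ZMod p)) :=
  (2 * X 0 : MvPolynomial (Fin 3) (ZMod p)) • pderiv 1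
    - (X 2 : MvPolynomial (Fin 3) (ZMod p)) • pderiv 0

/-- The derivation `β_+ = y_- ∂/∂y_0 - 2y_0 ∂/∂y_+`. -/
noncomputable def betaPlus (p : ℕ) :
    Derivation (ZMod p) (MvPolynomial (Fin 3) (ZMod p)) (MvPolynomial (Fin 3) (ZMod p)) :=
  (X 1 : MvPolynomial (Fin 3) (ZMod p)) • pderiv 0
    - (2 * X 0 : MvPolynomial (Fin 3) (ZMod p)) • pderiv 2

namespace Stmt9Aux

/-- The algebra map sending `X 0 ↦ κ = X 0 ^ 2 + X 1 * X 2` and fixing the other variables. -/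
noncomputable def Psi (p : ℕ) :
    MvPolynomial (Fin 3) (ZMod p) →ₐ[ZMod p] MvPolynomial (Fin 3) (ZMod p) :=
  aeval ![X 0 ^ 2 + X 1 * X 2, X 1, X 2]

noncomputable def theta (p : ℕ) :
    MvPolynomial (Fin 3) (ZMod p) →ₐ[ZMod p] MvPolynomial (Fin 3) (ZMod p) :=
  aeval ![X 0 + X 1 * X 2, X 1, X 2]

noncomputable def thetaInv (p : ℕ) :
    MvPolynomial (Fin 3) (ZMod p) →ₐ[ZMod p] MvPolynomial (Fin 3) (ZMod p) :=
  aeval ![X 0 - X 1 * X 2, X 1, X 2]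

noncomputable def sqr (p : ℕ) :
    MvPolynomial (Fin 3) (ZMod p) →ₐ[ZMod p] MvPolynomial (Fin 3) (ZMod p) :=
  aeval ![X 0 ^ 2, X 1, X 2]

/-- The involution `X 0 ↦ -X 0`. -/
noncomputable def iota (p : ℕ) :
    MvPolynomial (Fin 3) (ZMod p) →ₐ[ZMod p] MvPolynomial (Fin 3) (ZMod p) :=
  aeval ![-X 0, X 1, X 2]

/-- The evaluation `X 0 ↦ X 1 * X 2` (killing `cc`). -/
noncomputable def ev0 (p : ℕ) :
    MvPolynomial (Fin 3) (ZMod p) →ₐ[ZMod p] MvPolynomial (Fin 3) (ZMod p) :=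
  aeval ![X 1 * X 2, X 1, X 2]

/-- `cc = X 0 - X 1 * X 2`; note `Psi cc = X 0 ^ 2`. -/
noncomputable def cc (p : ℕ) : MvPolynomial (Fin 3) (ZMod p) := X 0 - X 1 * X 2

variable (p : ℕ)

@[simp] lemma Psi_X0 : Psi p (X 0) = X 0 ^ 2 + X 1 * X 2 := by simp [Psi]
@[simp] lemma Psi_X1 : Psi p (X 1) = X 1 := by simp [Psi]
@[simp] lemma Psi_X2 : Psi p (X 2) = X 2 := by simp [Psi]
@[simp] lemma Psi_C (a : ZMod p) : Psi p (C a) = C a := by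
  simp [Psi, algebraMap_eq]

lemma Psi_cc : Psi p (cc p) = X 0 ^ 2 := by
  simp [cc]

lemma thetaInv_comp_theta : (thetaInv p).comp (theta p) = AlgHom.id _ _ := by
  apply MvPolynomial.algHom_ext
  intro i
  fin_cases i <;> simp [theta, thetaInv]

lemma theta_injective : Function.Injective (theta p) := by
  intro x y h
  have h2 : ∀ z, thetaInv p (theta p z) = z := fun z =>
    congrArg (fun (g : _ →ₐ[ZMod p] _) => g z) (thetaInv_comp_theta p)
  rw [← h2 x, ← h2 y, h]

lemma fse_sqr_X (i : Fin 3) :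
    MvPolynomial.finSuccEquiv (ZMod p) 2 (sqr p (X i))
      = Polynomial.expand _ 2 (MvPolynomial.finSuccEquiv (ZMod p) 2 (X i)) := by
  fin_cases i
  · show MvPolynomial.finSuccEquiv (ZMod p) 2 (sqr p (X 0))
      = Polynomial.expand _ 2 (MvPolynomial.finSuccEquiv (ZMod p) 2 (X 0))
    simp [sqr, finSuccEquiv_X_zero]
  · show MvPolynomial.finSuccEquiv (ZMod p) 2 (sqr p (X ((0:Fin 2).succ)))
      = Polynomial.expand _ 2 (MvPolynomial.finSuccEquiv (ZMod p) 2 (X ((0:Fin 2).succ)))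
    rw [finSuccEquiv_X_succ, Polynomial.expand_C]
    rw [show (sqr p (X ((0:Fin 2).succ))) = X ((0:Fin 2).succ) by simp [sqr]]
    rw [finSuccEquiv_X_succ]
  · show MvPolynomial.finSuccEquiv (ZMod p) 2 (sqr p (X ((1:Fin 2).succ)))
      = Polynomial.expand _ 2 (MvPolynomial.finSuccEquiv (ZMod p) 2 (X ((1:Fin 2).succ)))
    rw [finSuccEquiv_X_succ, Polynomial.expand_C]
    rw [show (sqr p (X ((1:Fin 2).succ))) = X ((1:Fin 2).succ) by simp [sqr]]
    rw [finSuccEquiv_X_succ]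

lemma sqr_eq (f : MvPolynomial (Fin 3) (ZMod p)) :
    MvPolynomial.finSuccEquiv (ZMod p) 2 (sqr p f)
      = Polynomial.expand _ 2 (MvPolynomial.finSuccEquiv (ZMod p) 2 f) := by
  induction f using MvPolynomial.induction_on with
  | C a => simp [sqr, finSuccEquiv_apply]
  | add f g hf hg => simp only [map_add, hf, hg]
  | mul_X f i hf =>
      simp only [map_mul]
      rw [hf, fse_sqr_X]

lemma sqr_injective : Function.Injective (sqr p) := by
  intro x y h
  have := congrArg (MvPolynomial.finSuccEquiv (ZMod p) 2) h
  rw [sqr_eq, sqr_eq] at this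
  exact (MvPolynomial.finSuccEquiv (ZMod p) 2).injective
    (Polynomial.expand_injective (by norm_num) this)

lemma Psi_eq_sqr_comp_theta : Psi p = (sqr p).comp (theta p) := by
  apply MvPolynomial.algHom_ext
  intro i
  fin_cases i <;> simp [Psi, theta, sqr]

lemma Psi_injective : Function.Injective (Psi p) := by
  rw [Psi_eq_sqr_comp_theta]
  exact (sqr_injective p).comp (theta_injective p)

/-! ### chain rules -/

lemma betaMinus_Psi (f : MvPolynomial (Fin 3) (ZMod p)) :
    betaMinus p (Psi p f) = 2 * X 0 * Psi p (pderiv 1 f) := by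
  induction f using MvPolynomial.induction_on with
  | C a =>
      rw [show (Psi p (C a)) = algebraMap (ZMod p) _ a by simp [algebraMap_eq]]
      simp
  | add f g hf hg => simp only [map_add, hf, hg]; ring
  | mul_X f i hf =>
      rw [map_mul, Derivation.leibniz, smul_eq_mul, smul_eq_mul, hf]
      rw [pderiv_mul, map_add, map_mul, map_mul]
      fin_cases i <;> simp [betaMinus, pderiv_X] <;> ring

lemma betaPlus_Psi (f : MvPolynomial (Fin 3) (ZMod p)) :
    betaPlus p (Psi p f) = -(2 * X 0) * Psi p (pderiv 2 f) := by
  induction f using MvPolynomial.induction_on with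
  | C a =>
      rw [show (Psi p (C a)) = algebraMap (ZMod p) _ a by simp [algebraMap_eq]]
      simp
  | add f g hf hg => simp only [map_add, hf, hg]; ring
  | mul_X f i hf =>
      rw [map_mul, Derivation.leibniz, smul_eq_mul, smul_eq_mul, hf]
      rw [pderiv_mul, map_add, map_mul, map_mul]
      fin_cases i <;> simp [betaPlus, pderiv_X] <;> ring

@[simp] lemma betaMinus_X0 : betaMinus p (X 0) = -(X 2) := by simp [betaMinus, pderiv_X]
@[simp] lemma betaPlus_X0 : betaPlus p (X 0) = X 1 := by simp [betaPlus, pderiv_X]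

/-! ### decomposition -/

lemma decomp_exists (f : MvPolynomial (Fin 3) (ZMod p)) :
    ∃ G H : MvPolynomial (Fin 3) (ZMod p), f = Psi p G + X 0 * Psi p H := by
  induction f using MvPolynomial.induction_on with
  | C a => exact ⟨C a, 0, by simp⟩
  | add f g hf hg =>
      obtain ⟨G, H, rfl⟩ := hf
      obtain ⟨G', H', rfl⟩ := hg
      exact ⟨G + G', H + H', by simp only [map_add]; ring⟩
  | mul_X f i hf =>
      obtain ⟨G, H, rfl⟩ := hf
      fin_cases i
      · refine ⟨cc p * H, G, ?_⟩
        show _ * X 0 = _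
        rw [map_mul, Psi_cc]
        ring
      · refine ⟨G * X 1, H * X 1, ?_⟩
        show _ * X 1 = _
        simp only [map_mul, Psi_X1]
        ring
      · refine ⟨G * X 2, H * X 2, ?_⟩
        show _ * X 2 = _
        simp only [map_mul, Psi_X2]
        ring

lemma iota_comp_Psi : (iota p).comp (Psi p) = Psi p := by
  apply MvPolynomial.algHom_ext
  intro i
  fin_cases i <;> simp [iota, Psi] <;> ring

lemma two_ne_zero' [Fact p.Prime] (hp : p ≠ 2) : (2 : ZMod p) ≠ 0 := by
  intro h
  rw [show ((2:ZMod p)) = ((2:ℕ):ZMod p) by push_cast; ring] at h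
  rw [ZMod.natCast_eq_zero_iff] at h
  exact hp ((Nat.prime_dvd_prime_iff_eq (Fact.out) Nat.prime_two).mp h)

lemma two_ne_zero'' [Fact p.Prime] (hp : p ≠ 2) :
    (2 : MvPolynomial (Fin 3) (ZMod p)) ≠ 0 := by
  intro h
  apply two_ne_zero' p hp
  have h2 : (C (2:ZMod p) : MvPolynomial (Fin 3) (ZMod p)) = C (0:ZMod p) := by
    rw [map_ofNat, map_zero, h]
  exact C_injective _ _ h2

lemma decomp_unique [Fact p.Prime] (hp : p ≠ 2) (G H : MvPolynomial (Fin 3) (ZMod p))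
    (h : Psi p G + X 0 * Psi p H = 0) : G = 0 ∧ H = 0 := by
  have h2 := congrArg (iota p) h
  rw [map_add, map_mul, map_zero] at h2
  have hiota : ∀ z, iota p (Psi p z) = Psi p z := fun z =>
    congrArg (fun (g : _ →ₐ[ZMod p] _) => g z) (iota_comp_Psi p)
  rw [hiota, hiota, show iota p (X 0) = -X 0 by simp [iota]] at h2
  have hG : (2 : MvPolynomial (Fin 3) (ZMod p)) * Psi p G = 0 := by
    linear_combination h + h2
  have hG0 : Psi p G = 0 := by
    rcases mul_eq_zero.mp hG with h' | h'
    · exact absurd h' (two_ne_zero'' p hp)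
    · exact h'
  have hG' : G = 0 := Psi_injective p (by rw [hG0, map_zero])
  have hH : X 0 * Psi p H = 0 := by rw [hG0] at h; simpa using h
  rcases mul_eq_zero.mp hH with h' | h'
  · exact absurd h' (X_ne_zero 0)
  · exact ⟨hG', Psi_injective p (by rw [h', map_zero])⟩

/-! ### coefficients of pderiv -/

lemma coeff_pderiv (i : Fin 3) (m : Fin 3 →₀ ℕ) (f : MvPolynomial (Fin 3) (ZMod p)) :
    coeff m (pderiv i f) = coeff (m + Finsupp.single i 1) f * ((m i + 1 : ℕ) : ZMod p) := by
  induction f using MvPolynomial.induction_on' with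
  | monomial s a =>
      rw [pderiv_monomial, coeff_monomial, coeff_monomial]
      by_cases hs : s i = 0
      · have h1 : s - Finsupp.single i 1 = s := by
          ext j
          rcases eq_or_ne j i with rfl | hj
          · simp [hs]
          · simp [Finsupp.single_apply, Ne.symm hj]
        have h2 : s ≠ m + Finsupp.single i 1 := by
          intro hh
          apply absurd hs
          rw [hh]
          simp
        rw [h1, if_neg h2, zero_mul]
        by_cases hsm : s = m
        · subst hsm; simp [hs]
        · rw [if_neg hsm]
      · by_cases hsm : s = m + Finsupp.single i 1
        · have h1 : s - Finsupp.single i 1 = m := by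
            subst hsm
            ext j
            rcases eq_or_ne j i with rfl | hj
            · simp
            · simp [Finsupp.single_apply, Ne.symm hj]
          have h2 : s i = m i + 1 := by subst hsm; simp
          rw [if_pos h1, if_pos hsm, h2]
        · have h1 : s - Finsupp.single i 1 ≠ m := by
            intro hh
            apply hsm
            rw [← hh]
            ext j
            rcases eq_or_ne j i with rfl | hj
            · simp [Finsupp.single_apply]
              try omega
            · simp [Finsupp.single_apply, Ne.symm hj]
          rw [if_neg h1, if_neg hsm, zero_mul]
  | add f g hf hg => simp only [map_add, coeff_add, hf, hg]; ring

lemma dvd_of_pderiv_eq_zero [Fact p.Prime] (i : Fin 3) (f : MvPolynomial (Fin 3) (ZMod p))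
    (h : pderiv i f = 0) (m : Fin 3 →₀ ℕ) (hm : m ∈ f.support) : p ∣ m i := by
  by_cases hmi : m i = 0
  · simp [hmi]
  have key := coeff_pderiv p i (m - Finsupp.single i 1) f
  have hmm : (m - Finsupp.single i 1) + Finsupp.single i 1 = m := by
    ext j
    rcases eq_or_ne j i with rfl | hj
    · rw [Finsupp.add_apply, Finsupp.tsub_apply]
      simp [Finsupp.single_apply]
      omega
    · rw [Finsupp.add_apply, Finsupp.tsub_apply]
      simp [Finsupp.single_apply, Ne.symm hj]
  rw [h, coeff_zero, hmm] at key
  have hm' : ((m - Finsupp.single i 1 : Fin 3 →₀ ℕ)) i + 1 = m i := by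
    rw [Finsupp.tsub_apply]
    simp [Finsupp.single_apply]
    omega
  rw [hm'] at key
  have hc : coeff m f ≠ 0 := by simpa using hm
  have : ((m i : ℕ) : ZMod p) = 0 := by
    rcases mul_eq_zero.mp key.symm with h' | h'
    · exact absurd h' hc
    · exact h'
  exact (ZMod.natCast_eq_zero_iff _ _).mp this

/-! ### membership lemmas -/

def Agen (p : ℕ) : Set (MvPolynomial (Fin 3) (ZMod p)) :=
  {((X 0 : MvPolynomial (Fin 3) (ZMod p)) ^ 2 + X 1 * X 2),
   ((X 0 : MvPolynomial (Fin 3) (ZMod p)) ^ p),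
   ((X 1 : MvPolynomial (Fin 3) (ZMod p)) ^ p),
   ((X 2 : MvPolynomial (Fin 3) (ZMod p)) ^ p)}

lemma kappa_mem : (X 0 ^ 2 + X 1 * X 2 : MvPolynomial (Fin 3) (ZMod p))
    ∈ Algebra.adjoin (ZMod p) (Agen p) :=
  Algebra.subset_adjoin (by simp [Agen])

lemma X0p_mem : ((X 0 : MvPolynomial (Fin 3) (ZMod p)) ^ p)
    ∈ Algebra.adjoin (ZMod p) (Agen p) :=
  Algebra.subset_adjoin (by simp [Agen])

lemma X1p_mem : ((X 1 : MvPolynomial (Fin 3) (ZMod p)) ^ p)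
    ∈ Algebra.adjoin (ZMod p) (Agen p) :=
  Algebra.subset_adjoin (by simp [Agen])

lemma X2p_mem : ((X 2 : MvPolynomial (Fin 3) (ZMod p)) ^ p)
    ∈ Algebra.adjoin (ZMod p) (Agen p) :=
  Algebra.subset_adjoin (by simp [Agen])

lemma monomial_eq_prod3 (m : Fin 3 →₀ ℕ) (c : ZMod p) :
    (monomial m c : MvPolynomial (Fin 3) (ZMod p))
      = C c * X 0 ^ (m 0) * X 1 ^ (m 1) * X 2 ^ (m 2) := by
  rw [monomial_eq]
  rw [Finsupp.prod_fintype _ _ (fun i => pow_zero _)]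
  rw [Fin.prod_univ_three]
  ring

lemma PsiG_mem (G : MvPolynomial (Fin 3) (ZMod p))
    (h1 : ∀ m ∈ G.support, p ∣ m 1) (h2 : ∀ m ∈ G.support, p ∣ m 2) :
    Psi p G ∈ Algebra.adjoin (ZMod p) (Agen p) := by
  rw [G.as_sum, map_sum]
  apply Subalgebra.sum_mem
  intro m hm
  rw [monomial_eq_prod3, map_mul, map_mul, map_mul, Psi_C, map_pow, map_pow, map_pow,
    Psi_X0, Psi_X1, Psi_X2]
  obtain ⟨k1, hk1⟩ := h1 m hm
  obtain ⟨k2, hk2⟩ := h2 m hm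
  rw [hk1, hk2, pow_mul, pow_mul]
  exact mul_mem (mul_mem (mul_mem (Subalgebra.algebraMap_mem _ _)
    (pow_mem (kappa_mem p) _)) (pow_mem (X1p_mem p) _)) (pow_mem (X2p_mem p) _)

/-! ### the prime `cc` -/

lemma fse_cc : MvPolynomial.finSuccEquiv (ZMod p) 2 (cc p)
    = Polynomial.X - Polynomial.C (X 0 * X 1) := by
  rw [cc, map_sub, map_mul, finSuccEquiv_X_zero]
  rw [show (X (1:Fin 3) : MvPolynomial (Fin 3) (ZMod p)) = X ((0:Fin 2).succ) from rfl,
    show (X (2:Fin 3) : MvPolynomial (Fin 3) (ZMod p)) = X ((1:Fin 2).succ) from rfl,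
    finSuccEquiv_X_succ, finSuccEquiv_X_succ, ← map_mul]

lemma cc_prime [Fact p.Prime] : Prime (cc p) := by
  rw [← MulEquiv.prime_iff (p := cc p) (MvPolynomial.finSuccEquiv (ZMod p) 2).toRingEquiv.toMulEquiv]
  rw [show (MvPolynomial.finSuccEquiv (ZMod p) 2).toRingEquiv.toMulEquiv (cc p)
    = MvPolynomial.finSuccEquiv (ZMod p) 2 (cc p) from rfl, fse_cc]
  exact Polynomial.prime_X_sub_C _

lemma cc_ne_zero [Fact p.Prime] : cc p ≠ 0 := (cc_prime p).ne_zero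

@[simp] lemma ev0_cc : ev0 p (cc p) = 0 := by simp [cc, ev0]

lemma cc_not_dvd (z : MvPolynomial (Fin 3) (ZMod p)) (hz : ev0 p z ≠ 0) : ¬ cc p ∣ z := by
  intro ⟨u, hu⟩
  apply hz
  rw [hu, map_mul, ev0_cc, zero_mul]

/-! ### measure for induction -/

noncomputable def mu (p : ℕ) (H : MvPolynomial (Fin 3) (ZMod p)) : ℕ :=
  (MvPolynomial.finSuccEquiv (ZMod p) 2 H).natDegree

lemma mu_cc_mul [Fact p.Prime] (H : MvPolynomial (Fin 3) (ZMod p)) (hH : H ≠ 0) :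
    mu p (cc p * H) = 1 + mu p H := by
  have hEH : MvPolynomial.finSuccEquiv (ZMod p) 2 H ≠ 0 := by
    intro h
    exact hH ((MvPolynomial.finSuccEquiv (ZMod p) 2).injective (by rw [h, map_zero]))
  have hEc : (Polynomial.X - Polynomial.C ((X 0 * X 1 : MvPolynomial (Fin 2) (ZMod p))))
      ≠ 0 := Polynomial.X_sub_C_ne_zero _
  rw [mu, map_mul, fse_cc, Polynomial.natDegree_mul hEc hEH, Polynomial.natDegree_X_sub_C, mu]


lemma C_ne_zero' (a : ZMod p) (ha : a ≠ 0) : (C a : MvPolynomial (Fin 3) (ZMod p)) ≠ 0 := by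
  intro h
  exact ha (C_injective _ _ (by rw [h, map_zero]))

@[simp] lemma ev0_X1 : ev0 p (X 1) = X 1 := by simp [ev0]
@[simp] lemma ev0_X2 : ev0 p (X 2) = X 2 := by simp [ev0]
@[simp] lemma ev0_C (a : ZMod p) : ev0 p (C a) = C a := by simp [ev0, algebraMap_eq]

lemma pderiv1_cc : pderiv 1 (cc p) = -(X 2) := by simp [cc, pderiv_X]
lemma pderiv2_cc : pderiv 2 (cc p) = -(X 1) := by simp [cc, pderiv_X]

lemma descent [Fact p.Prime] (hp : p ≠ 2) :
    ∀ n : ℕ, ∀ m : ℕ, ∀ H : MvPolynomial (Fin 3) (ZMod p),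
    mu p H ≤ n →
    2 * cc p * pderiv 1 H = C ((2*m+1 : ℕ) : ZMod p) * (X 2 * H) →
    2 * cc p * pderiv 2 H = C ((2*m+1 : ℕ) : ZMod p) * (X 1 * H) →
    X 0 ^ (2*m+1) * Psi p H ∈ Algebra.adjoin (ZMod p) (Agen p) := by
  intro n
  induction n using Nat.strong_induction_on with
  | _ n IH =>
    intro m H hmu e1 e2
    by_cases hH : H = 0
    · subst hH
      simp only [map_zero, mul_zero]
      exact Subalgebra.zero_mem _
    by_cases hz : ((2*m+1 : ℕ) : ZMod p) = 0
    · have hd : ∀ i : Fin 3,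
          2 * cc p * pderiv i H = C ((2*m+1 : ℕ) : ZMod p) * (X 2 * H) ∨ True →
          True := fun _ _ => trivial
      have hd1 : pderiv 1 H = 0 := by
        have h0 : (2 : MvPolynomial (Fin 3) (ZMod p)) * cc p * pderiv 1 H = 0 := by
          rw [e1, hz, map_zero, zero_mul]
        rcases mul_eq_zero.mp h0 with h' | h'
        · rcases mul_eq_zero.mp h' with h'' | h''
          · exact absurd h'' (two_ne_zero'' p hp)
          · exact absurd h'' (cc_ne_zero p)
        · exact h'
      have hd2 : pderiv 2 H = 0 := by
        have h0 : (2 : MvPolynomial (Fin 3) (ZMod p)) * cc p * pderiv 2 H = 0 := by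
          rw [e2, hz, map_zero, zero_mul]
        rcases mul_eq_zero.mp h0 with h' | h'
        · rcases mul_eq_zero.mp h' with h'' | h''
          · exact absurd h'' (two_ne_zero'' p hp)
          · exact absurd h'' (cc_ne_zero p)
        · exact h'
      obtain ⟨t, ht⟩ := (ZMod.natCast_eq_zero_iff _ _).mp hz
      rw [ht, pow_mul]
      exact mul_mem (pow_mem (X0p_mem p) t)
        (PsiG_mem p H (fun m hm => dvd_of_pderiv_eq_zero p 1 H hd1 m hm)
          (fun m hm => dvd_of_pderiv_eq_zero p 2 H hd2 m hm))
    · have hdvd : cc p ∣ H := by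
        have h1 : cc p ∣ C ((2*m+1 : ℕ) : ZMod p) * (X 2 * H) :=
          ⟨2 * pderiv 1 H, by rw [← e1]; ring⟩
        rcases (cc_prime p).2.2 _ _ h1 with h' | h'
        · exact absurd h' (cc_not_dvd p _ (by rw [ev0_C]; exact C_ne_zero' p _ hz))
        rcases (cc_prime p).2.2 _ _ h' with h'' | h''
        · exact absurd h'' (cc_not_dvd p _ (by rw [ev0_X2]; exact X_ne_zero 2))
        · exact h''
      obtain ⟨H', rfl⟩ := hdvd
      have hH' : H' ≠ 0 := fun h => hH (by rw [h, mul_zero])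
      have hC : (C ((2*(m+1)+1 : ℕ) : ZMod p) : MvPolynomial (Fin 3) (ZMod p))
          = C ((2*m+1 : ℕ) : ZMod p) + 2 := by
        rw [show ((2*(m+1)+1 : ℕ) : ZMod p) = ((2*m+1:ℕ):ZMod p) + 2 by push_cast; ring,
          map_add, map_ofNat]
      have e1' : 2 * cc p * pderiv 1 H' = C ((2*(m+1)+1 : ℕ) : ZMod p) * (X 2 * H') := by
        apply mul_left_cancel₀ (cc_ne_zero p)
        rw [pderiv_mul, pderiv1_cc] at e1
        rw [hC]
        linear_combination e1
      have e2' : 2 * cc p * pderiv 2 H' = C ((2*(m+1)+1 : ℕ) : ZMod p) * (X 1 * H') := by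
        apply mul_left_cancel₀ (cc_ne_zero p)
        rw [pderiv_mul, pderiv2_cc] at e2
        rw [hC]
        linear_combination e2
      have hmu' : mu p H' < n := by
        have h1 := mu_cc_mul p H' hH'
        omega
      have mem := IH (mu p H') hmu' (m+1) H' le_rfl e1' e2'
      rw [map_mul, Psi_cc]
      rw [show X 0 ^ (2*m+1) * (X 0 ^ 2 * Psi p H') = X 0 ^ (2*(m+1)+1) * Psi p H' by
        rw [show 2*(m+1)+1 = (2*m+1)+2 by omega, pow_add]; ring]
      exact mem

theorem main_forward [Fact p.Prime] (hp : p ≠ 2) (f : MvPolynomial (Fin 3) (ZMod p))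
    (hM : betaMinus p f = 0) (hP : betaPlus p f = 0) :
    f ∈ Algebra.adjoin (ZMod p) (Agen p) := by
  obtain ⟨G, H, rfl⟩ := decomp_exists p f
  have key1 : Psi p (2 * cc p * pderiv 1 H - X 2 * H) + X 0 * Psi p (2 * pderiv 1 G) = 0 := by
    rw [← hM, map_add, Derivation.leibniz (betaMinus p) (X 0) (Psi p H),
      betaMinus_Psi, betaMinus_Psi, betaMinus_X0]
    simp only [map_sub, map_mul, Psi_cc, Psi_X2, smul_eq_mul, map_ofNat]
    ring
  obtain ⟨h1, h1G⟩ := decomp_unique p hp _ _ key1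
  have key2 : Psi p (X 1 * H - 2 * cc p * pderiv 2 H)
      + X 0 * Psi p (-(2 * pderiv 2 G)) = 0 := by
    rw [← hP, map_add, Derivation.leibniz (betaPlus p) (X 0) (Psi p H),
      betaPlus_Psi, betaPlus_Psi, betaPlus_X0]
    simp only [map_sub, map_mul, map_neg, Psi_cc, Psi_X1, smul_eq_mul, map_ofNat]
    ring
  obtain ⟨h2, h2G⟩ := decomp_unique p hp _ _ key2
  have hd1G : pderiv 1 G = 0 := by
    rcases mul_eq_zero.mp h1G with h' | h'
    · exact absurd h' (two_ne_zero'' p hp)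
    · exact h'
  have hd2G : pderiv 2 G = 0 := by
    have h2G' : (2 : MvPolynomial (Fin 3) (ZMod p)) * pderiv 2 G = 0 := by
      have := congrArg Neg.neg h2G
      simpa using this
    rcases mul_eq_zero.mp h2G' with h' | h'
    · exact absurd h' (two_ne_zero'' p hp)
    · exact h'
  have e1 : 2 * cc p * pderiv 1 H = C ((2*0+1 : ℕ) : ZMod p) * (X 2 * H) := by
    rw [show ((2*0+1:ℕ):ZMod p) = 1 by norm_num, map_one, one_mul]
    linear_combination h1
  have e2 : 2 * cc p * pderiv 2 H = C ((2*0+1 : ℕ) : ZMod p) * (X 1 * H) := by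
    rw [show ((2*0+1:ℕ):ZMod p) = 1 by norm_num, map_one, one_mul]
    linear_combination -h2
  have memH := descent p hp (mu p H) 0 H le_rfl e1 e2
  rw [show 2*0+1 = 1 by omega, pow_one] at memH
  exact add_mem
    (PsiG_mem p G (fun m hm => dvd_of_pderiv_eq_zero p 1 G hd1G m hm)
      (fun m hm => dvd_of_pderiv_eq_zero p 2 G hd2G m hm))
    memH

theorem main_backward [Fact p.Prime] (f : MvPolynomial (Fin 3) (ZMod p))
    (hf : f ∈ Algebra.adjoin (ZMod p) (Agen p)) :
    betaZero p f = 0 ∧ betaMinus p f = 0 ∧ betaPlus p f = 0 := by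
  have hpz : ((p : ℕ) : MvPolynomial (Fin 3) (ZMod p)) = 0 := by
    exact_mod_cast CharP.cast_eq_zero (MvPolynomial (Fin 3) (ZMod p)) p
  refine Algebra.adjoin_induction ?_ ?_ ?_ ?_ hf
  · intro x hx
    simp only [Agen, Set.mem_insert_iff, Set.mem_singleton_iff] at hx
    rcases hx with rfl | rfl | rfl | rfl <;>
      refine ⟨?_, ?_, ?_⟩ <;>
        simp [betaZero, betaMinus, betaPlus, pderiv_X, pderiv_mul, pderiv_pow, hpz] <;>
          ring
  · intro r
    exact ⟨Derivation.map_algebraMap _ r, Derivation.map_algebraMap _ r,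
      Derivation.map_algebraMap _ r⟩
  · intro x y _ _ hx hy
    exact ⟨by rw [map_add, hx.1, hy.1, add_zero],
      by rw [map_add, hx.2.1, hy.2.1, add_zero],
      by rw [map_add, hx.2.2, hy.2.2, add_zero]⟩
  · intro x y _ _ hx hy
    exact ⟨by rw [Derivation.leibniz, hx.1, hy.1, smul_zero, smul_zero, add_zero],
      by rw [Derivation.leibniz, hx.2.1, hy.2.1, smul_zero, smul_zero, add_zero],
      by rw [Derivation.leibniz, hx.2.2, hy.2.2, smul_zero, smul_zero, add_zero]⟩

end Stmt9Aux

open Stmt9Aux in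
/-- A polynomial `f ∈ F_p[y_0, y_-, y_+]` is killed by all three `sl_2`-derivations
`β_0, β_-, β_+` if and only if it lies in the `F_p`-subalgebra generated by
`κ = y_0^2 + y_- y_+`, `s_0 = y_0^p`, `s_- = y_-^p` and `s_+ = y_+^p`.  In particular the
invariant ring `H^0(sl_2(F_p), Poly(ad^*))` equals this subalgebra. -/
theorem stmt9 (p : ℕ) [Fact p.Prime] (hp : p ≠ 2)
    (f : MvPolynomial (Fin 3) (ZMod p)) :
    (betaZero p f = 0 ∧ betaMinus p f = 0 ∧ betaPlus p f = 0) ↔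
      f ∈ Algebra.adjoin (ZMod p)
        {((X 0 : MvPolynomial (Fin 3) (ZMod p)) ^ 2 + X 1 * X 2),
         ((X 0 : MvPolynomial (Fin 3) (ZMod p)) ^ p),
         ((X 1 : MvPolynomial (Fin 3) (ZMod p)) ^ p),
         ((X 2 : MvPolynomial (Fin 3) (ZMod p)) ^ p)} := by
  constructor
  · intro ⟨_, hM, hP⟩
    exact main_forward p hp f hM hP
  · intro hf
    exact main_backward p f hf
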